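/- Let G be a finite non-cyclic group in which all irredundant covers have the same size. Then for any two distinct maximal cyclic subgroups C₁ and C₂ of G, the subgroup generated by C₁ ∪ C₂ equals G. -/

import Mathlib

def IsCover {G : Type*} [Group G] (S : Set (Subgroup G)) : Prop :=
  (∀ H ∈ S, H ≠ (⊤ : Subgroup G)) ∧ ∀ g : G, ∃ H ∈ S, g ∈ H

def IsIrredundantCover {G : Type*} [Group G] (S : Set (Subgroup G)) : Prop :=
  IsCover S ∧ ∀ T : Set (Subgroup G), T ⊂ S → ¬ IsCover T

def IsMaxCyclic {G : Type*} [Group G] (C : Subgroup G) : Prop :=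
  IsCyclic C ∧ ∀ D : Subgroup G, IsCyclic D → C ≤ D → C = D

def OnlyOneSizedCovers (G : Type*) [Group G] : Prop :=
  ∀ S T : Set (Subgroup G), IsIrredundantCover S → IsIrredundantCover T →
    S.ncard = T.ncard

section Aux
variable {G : Type*} [Group G]

lemma aux_gen (C : Subgroup G) (h : IsCyclic C) : ∃ g : G, Subgroup.zpowers g = C := by
  obtain ⟨⟨x, hx⟩⟩ := h
  refine ⟨(x : G), le_antisymm (by simp [Subgroup.zpowers_le.2 x.2]) ?_⟩
  intro y hy
  obtain ⟨n, hn⟩ := hx ⟨y, hy⟩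
  exact ⟨n, by simpa using congrArg Subtype.val hn⟩

lemma aux_cyclic_of_le {H D : Subgroup G} (hle : H ≤ D) (h : IsCyclic D) : IsCyclic H := by
  have e := Subgroup.subgroupOfEquivOfLe hle
  exact isCyclic_of_surjective e.toMonoidHom e.surjective

lemma aux_exists_maxCyclic [Finite G] (g : G) : ∃ C, IsMaxCyclic C ∧ g ∈ C := by
  have hfin : (Set.univ : Set (Subgroup G)).Finite := Set.finite_univ
  have hfin2 : {D : Subgroup G | IsCyclic D ∧ g ∈ D}.Finite := Set.Finite.subset hfin (by simp)
  have hne : {D : Subgroup G | IsCyclic D ∧ g ∈ D}.Nonempty :=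
    ⟨Subgroup.zpowers g,
      ⟨⟨⟨⟨g, Subgroup.mem_zpowers g⟩, fun y => by
        obtain ⟨n, hn⟩ := y.2
        exact ⟨n, Subtype.ext (by simpa using hn)⟩⟩⟩, Subgroup.mem_zpowers g⟩⟩
  obtain ⟨C, hC, hmax⟩ := Set.Finite.exists_maximalFor id _ hfin2 hne
  refine ⟨C, ⟨hC.1, fun D hD hle => ?_⟩, hC.2⟩
  exact le_antisymm hle (hmax (j := D) ⟨hD, hle hC.2⟩ hle)

lemma aux_maxCyclic_ne_top [Finite G] (hG : ¬ IsCyclic G) {C : Subgroup G}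
    (hC : IsMaxCyclic C) : C ≠ ⊤ := by
  intro htop
  haveI : IsCyclic (⊤ : Subgroup G) := htop ▸ hC.1
  exact hG (isCyclic_of_surjective Subgroup.topEquiv.toMonoidHom Subgroup.topEquiv.surjective)

/-- the set of all maximal cyclic subgroups is an irredundant cover -/
lemma aux_M_cover [Finite G] (hG : ¬ IsCyclic G) :
    IsIrredundantCover {C : Subgroup G | IsMaxCyclic C} := by
  constructor
  · exact ⟨fun H hH => aux_maxCyclic_ne_top hG hH,
      fun g => by obtain ⟨C, hC, hg⟩ := aux_exists_maxCyclic g; exact ⟨C, hC, hg⟩⟩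
  · rintro T hT ⟨-, hTcov⟩
    obtain ⟨C, hCM, hCT⟩ := Set.exists_of_ssubset hT
    obtain ⟨g, hg⟩ := aux_gen C hCM.1
    obtain ⟨H, hHT, hgH⟩ := hTcov g
    have hHM : IsMaxCyclic H := hT.1 hHT
    have : C ≤ H := hg ▸ Subgroup.zpowers_le.2 hgH
    exact hCT (hCM.2 H hHM.1 this ▸ hHT)

lemma aux_exists_irredundant [Finite G] (S : Set (Subgroup G)) (hS : IsCover S) :
    ∃ T ⊆ S, IsIrredundantCover T := by
  classical
  have hfin : ∀ T : Set (Subgroup G), T.Finite := fun T => Set.toFinite T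
  set P : Set (Set (Subgroup G)) := {T | T ⊆ S ∧ IsCover T}
  have hPne : P.Nonempty := ⟨S, le_refl _, hS⟩
  obtain ⟨T, hTP, hTmin⟩ := Set.Finite.exists_minimalFor Set.ncard P
    (Set.Finite.subset (Set.finite_univ) (by simp)) hPne
  refine ⟨T, hTP.1, hTP.2, fun T' hT' hT'cov => ?_⟩
  have hlt : T'.ncard < T.ncard := Set.ncard_lt_ncard hT' (hfin T)
  have := hTmin (j := T') ⟨hT'.subset.trans hTP.1, hT'cov⟩ (le_of_lt hlt)
  omega
end Aux

theorem stmt5 (G : Type*) [Group G] [Finite G] (hG : ¬ IsCyclic G)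
    (h : OnlyOneSizedCovers G) (C₁ C₂ : Subgroup G)
    (h₁ : IsMaxCyclic C₁) (h₂ : IsMaxCyclic C₂) (hne : C₁ ≠ C₂) :
    C₁ ⊔ C₂ = ⊤ := by
  by_contra hK
  set M : Set (Subgroup G) := {C : Subgroup G | IsMaxCyclic C} with hM
  have hMcov := aux_M_cover hG
  set K := C₁ ⊔ C₂ with hKdef
  have hKM : K ∉ M := by
    intro hKm
    have e1 : C₁ = K := h₁.2 K hKm.1 le_sup_left
    have e2 : C₂ = K := h₂.2 K hKm.1 le_sup_right
    exact hne (e1.trans e2.symm)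
  set S : Set (Subgroup G) := insert K (M \ {C₁, C₂}) with hSdef
  have hMfin : M.Finite := Set.toFinite M
  have hScov : IsCover S := by
    constructor
    · rintro H (rfl | ⟨hHM, -⟩)
      · exact hK
      · exact aux_maxCyclic_ne_top hG hHM
    · intro g
      obtain ⟨C, hC, hg⟩ := aux_exists_maxCyclic g
      by_cases hc : C = C₁ ∨ C = C₂
      · refine ⟨K, Set.mem_insert _ _, ?_⟩
        rcases hc with h' | h'
        · exact Subgroup.mem_sup_left (h' ▸ hg)
        · exact Subgroup.mem_sup_right (h' ▸ hg)
      · exact ⟨C, Set.mem_insert_of_mem _ ⟨hC, by simpa using hc⟩, hg⟩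
  obtain ⟨T, hTS, hTirr⟩ := aux_exists_irredundant S hScov
  have hpair : ({C₁, C₂} : Set (Subgroup G)) ⊆ M := by
    rintro x (rfl | rfl); exacts [h₁, h₂]
  have hM2 : 2 ≤ M.ncard := by
    have : ({C₁, C₂} : Set (Subgroup G)).ncard = 2 := Set.ncard_pair hne
    calc 2 = ({C₁, C₂} : Set (Subgroup G)).ncard := this.symm
    _ ≤ M.ncard := Set.ncard_le_ncard hpair hMfin
  have hSn : S.ncard = M.ncard - 1 := by
    have h1 : S.ncard = (M \ {C₁, C₂}).ncard + 1 :=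
      Set.ncard_insert_of_notMem (fun hx => hKM hx.1) (Set.toFinite _)
    have h2 : (M \ {C₁, C₂}).ncard = M.ncard - 2 := by
      rw [Set.ncard_diff hpair, Set.ncard_pair hne]
    omega
  have hTn : T.ncard ≤ S.ncard := Set.ncard_le_ncard hTS (Set.toFinite _)
  have := h T M hTirr hMcov
  omega
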